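/- Let n ≥ 2 and d > 0. Suppose points a, c₁,...,cₙ, b ∈ ℂⁿ satisfy φₙ(a,cᵢ) = φₙ(b,cᵢ) = d² for all i, and φₙ(cᵢ,cⱼ) = (2+2/n)·d² for all i < j. Then φₙ(a,b) = (4/n²)·d² or φₙ(a,b) = 0. -/

import Mathlib

noncomputable def phi (n : ℕ) (x y : Fin n → ℂ) : ℂ := ∑ i, (x i - y i) ^ 2

open Matrix

lemma dot_sub_sub {n : ℕ} (u v : Fin n → ℂ) :
    (u - v) ⬝ᵥ (u - v) = u ⬝ᵥ u - 2 * (u ⬝ᵥ v) + v ⬝ᵥ v := by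
  rw [sub_dotProduct, dotProduct_sub, dotProduct_sub, dotProduct_comm v u]; ring

lemma dot_sum_right {n : ℕ} (u : Fin n → ℂ) (v : Fin n → Fin n → ℂ) :
    u ⬝ᵥ (∑ i, v i) = ∑ i, u ⬝ᵥ v i := by
  simp [dotProduct, Finset.mul_sum]
  rw [Finset.sum_comm]

lemma phi_eq_dot {n : ℕ} (x y : Fin n → ℂ) : phi n x y = (x - y) ⬝ᵥ (x - y) := by
  simp [phi, dotProduct, sq]

theorem stmt14 (n : ℕ) (hn : 2 ≤ n) (d : ℝ) (hd : 0 < d)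
    (a b : Fin n → ℂ) (c : Fin n → (Fin n → ℂ))
    (h1 : ∀ i, phi n a (c i) = (d : ℂ) ^ 2)
    (h2 : ∀ i, phi n b (c i) = (d : ℂ) ^ 2)
    (h3 : ∀ i j : Fin n, i < j → phi n (c i) (c j) = (2 + 2 / (n : ℂ)) * (d : ℂ) ^ 2) :
    phi n a b = (4 / (n : ℂ) ^ 2) * (d : ℂ) ^ 2 ∨ phi n a b = 0 := by
  have hn0 : (n : ℂ) ≠ 0 := Nat.cast_ne_zero.2 (by omega)
  have hn1 : (n : ℂ) + 1 ≠ 0 := by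
    have : ((n + 1 : ℕ) : ℂ) ≠ 0 := Nat.cast_ne_zero.2 (by omega)
    push_cast at this; exact this
  have hd2 : (d : ℂ) ^ 2 ≠ 0 := pow_ne_zero _ (by exact_mod_cast hd.ne')
  have hd0 : (d : ℂ) ≠ 0 := by exact_mod_cast hd.ne'
  set v : Fin n → Fin n → ℂ := fun i => c i - a with hv
  set w : Fin n → ℂ := b - a with hw
  -- basic dot product facts
  have hvv : ∀ i, v i ⬝ᵥ v i = (d : ℂ) ^ 2 := by
    intro i
    have := h1 i
    rw [phi_eq_dot] at this
    have h : a - c i = -(v i) := by funext k; simp only [hv, Pi.neg_apply, Pi.sub_apply]; ring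
    rw [h] at this
    simpa using this
  have hvij : ∀ i j, i ≠ j → v i ⬝ᵥ v j = -((d : ℂ) ^ 2) / n := by
    have key : ∀ i j, i < j → v i ⬝ᵥ v j = -((d : ℂ) ^ 2) / n := by
      intro i j hij
      have h := h3 i j hij
      rw [phi_eq_dot] at h
      have he : c i - c j = v i - v j := by simp [hv]
      rw [he, dot_sub_sub, hvv, hvv] at h
      linear_combination -h / 2
    intro i j hij
    rcases lt_or_gt_of_ne hij with h | h
    · exact key i j h
    · rw [dotProduct_comm]; exact key j i h
  have hwv : ∀ i, w ⬝ᵥ v i = (w ⬝ᵥ w) / 2 := by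
    intro i
    have h := h2 i
    rw [phi_eq_dot] at h
    have he : b - c i = w - v i := by funext k; simp only [hw, hv, Pi.sub_apply]; ring
    rw [he, dot_sub_sub, hvv] at h
    linear_combination -h / 2
  -- matrix setup
  set M : Matrix (Fin n) (Fin n) ℂ := Matrix.of v with hM
  set J : Matrix (Fin n) (Fin n) ℂ := Matrix.of (fun _ _ => 1) with hJ
  have hJJ : J * J = (n : ℂ) • J := by
    ext i j
    simp [hJ, Matrix.mul_apply]
  have hG : M * Mᵀ = ((d:ℂ)^2 + (d:ℂ)^2 / n) • (1 : Matrix (Fin n) (Fin n) ℂ)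
      + (-((d:ℂ)^2) / n) • J := by
    ext i j
    have : (M * Mᵀ) i j = v i ⬝ᵥ v j := by
      simp [Matrix.mul_apply, hM, dotProduct]
    rw [this]
    rcases eq_or_ne i j with rfl | hij
    · rw [hvv]
      simp [hJ, Matrix.one_apply]
      field_simp; ring
    · rw [hvij i j hij]
      simp [hJ, Matrix.one_apply, hij]
  -- inverse of the Gram matrix
  set γ : ℂ := n / ((d:ℂ)^2 * (n + 1)) with hγ
  have hGH : (M * Mᵀ) * (γ • (1 + J)) = 1 := by
    rw [hG, Matrix.mul_smul, add_mul, mul_add, mul_add, Matrix.mul_one, Matrix.mul_one,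
      smul_mul_assoc, smul_mul_assoc, Matrix.one_mul, hJJ]
    match_scalars
    · rw [hγ]; field_simp
    · rw [hγ]; field_simp; ring
  have hdetM : IsUnit M.det := by
    have h := Matrix.isUnit_det_of_right_inverse hGH
    rw [Matrix.det_mul, Matrix.det_transpose] at h
    exact isUnit_of_mul_isUnit_left h
  -- q := w - λ • S is killed by M, hence zero
  set s : ℂ := (w ⬝ᵥ w) / 2 with hs
  set S : Fin n → ℂ := ∑ i, v i with hS
  have hvS : ∀ j, v j ⬝ᵥ S = (d:ℂ)^2 / n := by
    intro j
    rw [hS, dot_sum_right]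
    have : ∀ i, v j ⬝ᵥ v i = (if i = j then (d:ℂ)^2 else -((d:ℂ)^2)/n) := by
      intro i
      rcases eq_or_ne i j with rfl | hij
      · simp [hvv]
      · rw [dotProduct_comm, hvij i j hij, if_neg hij]
    rw [Finset.sum_congr rfl (fun i _ => this i)]
    rw [Finset.sum_ite, Finset.filter_eq', if_pos (Finset.mem_univ j), Finset.filter_ne']
    simp only [Finset.sum_const, Finset.card_singleton, one_smul, smul_eq_mul,
      Finset.card_erase_of_mem (Finset.mem_univ j), Finset.card_univ, Fintype.card_fin,
      nsmul_eq_mul]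
    have hcast : ((n - 1 : ℕ) : ℂ) = (n : ℂ) - 1 := by
      have : 1 ≤ n := by omega
      push_cast [Nat.cast_sub this]; ring
    rw [hcast]
    field_simp; ring
  have hwS : w ⬝ᵥ S = n * s := by
    rw [hS, dot_sum_right]
    simp [hwv, hs, Finset.sum_const, Finset.card_univ, mul_comm]
  set q : Fin n → ℂ := w - ((n : ℂ) * s / (d:ℂ)^2) • S with hq
  have hMq : M *ᵥ q = 0 := by
    funext j
    have : (M *ᵥ q) j = v j ⬝ᵥ q := rfl
    rw [this, hq, dotProduct_sub, dotProduct_smul, hvS, dotProduct_comm, hwv]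
    simp only [smul_eq_mul, Pi.zero_apply, hs]
    field_simp
    ring
  have hq0 : q = 0 := by
    have h1' : M⁻¹ * M = 1 := Matrix.nonsing_inv_mul M hdetM
    calc q = (M⁻¹ * M) *ᵥ q := by rw [h1', Matrix.one_mulVec]
    _ = M⁻¹ *ᵥ (M *ᵥ q) := by rw [Matrix.mulVec_mulVec]
    _ = 0 := by rw [hMq, Matrix.mulVec_zero]
  have hwlam : w = ((n : ℂ) * s / (d:ℂ)^2) • S := by
    have := sub_eq_zero.mp hq0
    exact this
  -- final computation
  have hP : phi n a b = w ⬝ᵥ w := by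
    rw [phi_eq_dot]
    have : a - b = -w := by rw [hw]; abel
    rw [this]
    simp
  have hww : w ⬝ᵥ w = 2 * s := by rw [hs]; ring
  have hkey : 2 * s = (n:ℂ)^2 * s^2 / (d:ℂ)^2 := by
    have h' : w ⬝ᵥ w = ((n : ℂ) * s / (d:ℂ)^2) * (w ⬝ᵥ S) := by
      nth_rewrite 2 [hwlam]
      rw [dotProduct_smul, smul_eq_mul]
    rw [hww, hwS] at h'
    rw [h']
    ring
  rcases eq_or_ne s 0 with h0 | h0
  · right; rw [hP, hww, h0, mul_zero]
  · left
    have hn2 : (n:ℂ)^2 ≠ 0 := pow_ne_zero _ hn0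
    have hfac : s * (s * (n:ℂ)^2 - 2 * (d:ℂ)^2) = 0 := by
      field_simp at hkey
      linear_combination -s * hkey
    have hs' : s = 2 * (d:ℂ)^2 / (n:ℂ)^2 := by
      rcases mul_eq_zero.mp hfac with h | h
      · exact absurd h h0
      · field_simp
        linear_combination h
    rw [hP, hww, hs']
    ring
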